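/- Under the drift condition PV ≤ λV off C and PV ≤ K on C (V ≥ 1, λ < 1), for 1 < r < λ^{-1} and x ∈ C, one has (H(r,x) − rH(1,x))/(r−1) ≤ λr(K−1)/((1−λ)(1−rλ)), where H(r,x) = E^x(∑_{n=1}^{τ} r^n V(X_n)) and τ is the first return time to C. -/

import Mathlib

open MeasureTheory ProbabilityTheory

/-- `hSeq κ C V n x = E^x (V (X_n) 1_{τ ≥ n})` where `τ = inf {n ≥ 1 : X_n ∈ C}`, so that
`H(r,x) = E^x (∑_{n=1}^τ r^n V (X_n)) = ∑_{n} r^n hSeq κ C V n x`. -/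
noncomputable def hSeq {S : Type*} [MeasurableSpace S] (κ : Kernel S S) (C : Set S)
    (V : S → ℝ) : ℕ → S → ℝ
  | 0 => fun _ => 0
  | 1 => fun x => ∫ y, V y ∂(κ x)
  | n + 2 => fun x => ∫ y, Set.indicator Cᶜ (hSeq κ C V (n + 1)) y ∂(κ x)

set_option maxHeartbeats 1000000 in
theorem stmt15 {S : Type*} [MeasurableSpace S] (κ : Kernel S S) [IsMarkovKernel κ]
    (C : Set S) (hC : MeasurableSet C)
    (V : S → ℝ) (hVm : Measurable V) (hV1 : ∀ x, 1 ≤ V x)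
    (lam K : ℝ) (hlam0 : 0 < lam) (hlam1 : lam < 1)
    (hVint : ∀ x, Integrable V (κ x))
    (hout : ∀ x ∉ C, ∫ y, V y ∂(κ x) ≤ lam * V x)
    (hin : ∀ x ∈ C, ∫ y, V y ∂(κ x) ≤ K) :
    ∀ r : ℝ, 1 < r → r < lam⁻¹ → ∀ x ∈ C,
      ((∑' n, r ^ n * hSeq κ C V n x) - r * ∑' n, hSeq κ C V n x) / (r - 1) ≤
        lam * r * (K - 1) / ((1 - lam) * (1 - r * lam)) := by
  intro r hr1 hr2 x hxC
  have hV0 : ∀ z, (0:ℝ) ≤ V z := fun z => le_trans zero_le_one (hV1 z)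
  have hr0 : (0:ℝ) ≤ r := by linarith
  have hrl : r * lam < 1 := by
    have := mul_lt_mul_of_pos_right hr2 hlam0
    rwa [inv_mul_cancel₀ hlam0.ne'] at this
  have h1lam : 0 < 1 - lam := by linarith
  have h1rl : 0 < 1 - r * lam := by linarith
  set a1 : ℝ := lam / (1 - lam) with ha1def
  have ha1 : 0 ≤ a1 := div_nonneg hlam0.le h1lam.le
  have haa : lam + a1 * lam = a1 := by rw [ha1def]; field_simp; ring
  set β : ℝ := lam * (r - 1) / ((1 - lam) * (1 - r * lam)) with hβdef
  have hβ : 0 ≤ β := by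
    rw [hβdef]; apply div_nonneg (by nlinarith) (by positivity)
  set γ : ℝ := r * β + (r - 1) * a1 with hγdef
  have hγ : 0 ≤ γ := by rw [hγdef]; nlinarith
  have hβγ : β ≤ γ := by rw [hγdef]; nlinarith
  have hγβ : lam * (r - 1) + γ * lam = β := by
    rw [hγdef, hβdef, ha1def]; field_simp [h1lam.ne', h1rl.ne', (by linarith : 1 - lam * r ≠ 0)]; ring
  -- basic equations
  have hrec : ∀ n z, hSeq κ C V (n+2) z
      = ∫ y, Set.indicator Cᶜ (hSeq κ C V (n + 1)) y ∂(κ z) := fun n z => rfl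
  have hone : ∀ z, hSeq κ C V 1 z = ∫ y, V y ∂(κ z) := fun z => rfl
  have hzero : ∀ z, hSeq κ C V 0 z = 0 := fun z => rfl
  -- measurability
  have hmeas : ∀ n, Measurable (hSeq κ C V (n+1)) := by
    intro n
    induction n with
    | zero =>
      exact (MeasureTheory.StronglyMeasurable.integral_kernel_prod_right'
        (f := fun p : S × S => V p.2)
        ((hVm.comp measurable_snd).stronglyMeasurable)).measurable
    | succ m ih =>
      exact (MeasureTheory.StronglyMeasurable.integral_kernel_prod_right'
        (f := fun p : S × S => Set.indicator Cᶜ (hSeq κ C V (m+1)) p.2)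
        (((ih.indicator hC.compl).comp measurable_snd).stronglyMeasurable)).measurable
  -- nonnegativity
  have hpos : ∀ n z, 0 ≤ hSeq κ C V n z := by
    have key : ∀ n z, 0 ≤ hSeq κ C V (n+1) z := by
      intro n
      induction n with
      | zero => intro z; exact integral_nonneg (fun y => hV0 y)
      | succ m ih =>
        intro z
        exact integral_nonneg (fun y => Set.indicator_nonneg (fun y' _ => ih y') y)
    intro n z
    cases n with
    | zero => simp [hzero]
    | succ m => exact key m z
  -- geometric bound off C
  have hle : ∀ n, ∀ y ∉ C, hSeq κ C V (n+1) y ≤ lam ^ (n+1) * V y := by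
    intro n
    induction n with
    | zero => intro y hy; rw [hone, pow_one]; exact hout y hy
    | succ m ih =>
      intro y hy
      have hb : ∀ z, Set.indicator Cᶜ (hSeq κ C V (m+1)) z ≤ lam ^ (m+1) * V z := by
        intro z
        by_cases hz : z ∈ Cᶜ
        · rw [Set.indicator_of_mem hz]; exact ih z hz
        · rw [Set.indicator_of_notMem hz]
          exact mul_nonneg (by positivity) (hV0 z)
      have hint' : Integrable (Set.indicator Cᶜ (hSeq κ C V (m+1))) (κ y) := by
        refine Integrable.mono' (((hVint y).const_mul (lam ^ (m+1)))) ?_ ?_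
        · exact ((hmeas m).indicator hC.compl).aestronglyMeasurable
        · filter_upwards with z
          rw [Real.norm_eq_abs,
            abs_of_nonneg (Set.indicator_nonneg (fun y' _ => hpos _ y') z)]
          exact hb z
      calc hSeq κ C V (m+2) y = ∫ z, Set.indicator Cᶜ (hSeq κ C V (m+1)) z ∂(κ y) :=
            hrec m y
        _ ≤ ∫ z, lam ^ (m+1) * V z ∂(κ y) :=
            integral_mono hint' ((hVint y).const_mul _) hb
        _ = lam ^ (m+1) * ∫ z, V z ∂(κ y) := integral_const_mul _ _
        _ ≤ lam ^ (m+1) * (lam * V y) :=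
            mul_le_mul_of_nonneg_left (hout y hy) (by positivity)
        _ = lam ^ (m+2) * V y := by ring
  -- pointwise bound for the indicator, everywhere
  have hind_le : ∀ n z, Set.indicator Cᶜ (hSeq κ C V (n+1)) z ≤ lam ^ (n+1) * V z := by
    intro n z
    by_cases hz : z ∈ Cᶜ
    · rw [Set.indicator_of_mem hz]; exact hle n z hz
    · rw [Set.indicator_of_notMem hz]
      exact mul_nonneg (by positivity) (hV0 z)
  -- integrability of the indicator
  have hint : ∀ n z, Integrable (Set.indicator Cᶜ (hSeq κ C V (n+1))) (κ z) := by
    intro n z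
    refine Integrable.mono' (((hVint z).const_mul (lam ^ (n+1)))) ?_ ?_
    · exact ((hmeas n).indicator hC.compl).aestronglyMeasurable
    · filter_upwards with w
      rw [Real.norm_eq_abs, abs_of_nonneg (Set.indicator_nonneg (fun y' _ => hpos _ y') w)]
      exact hind_le n w
  have hintV1 : ∀ (c : ℝ) z, Integrable (fun w => c * (V w - 1)) (κ z) :=
    fun c z => ((hVint z).sub (integrable_const 1)).const_mul c
  have hintVeq : ∀ (c : ℝ) z, ∫ w, c * (V w - 1) ∂(κ z) = c * ((∫ w, V w ∂(κ z)) - 1) := by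
    intro c z
    rw [integral_const_mul, integral_sub (hVint z) (integrable_const 1), integral_const]
    simp
  -- bound for ∑ h_{n+1} off C
  have hF1 : ∀ N, ∀ y ∉ C, ∑ n ∈ Finset.range N, hSeq κ C V (n+1) y ≤ a1 * (V y - 1) := by
    intro N
    induction N with
    | zero =>
      intro y hy; simp only [Finset.range_zero, Finset.sum_empty]
      exact mul_nonneg ha1 (by linarith [hV1 y])
    | succ N ih =>
      intro y hy
      have hsum : ∑ n ∈ Finset.range (N+1), hSeq κ C V (n+1) y
          = (∑ n ∈ Finset.range N, hSeq κ C V (n+2) y) + hSeq κ C V 1 y :=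
        Finset.sum_range_succ' _ N
      have hrw : ∑ n ∈ Finset.range N, hSeq κ C V (n+2) y
          = ∫ z, (∑ n ∈ Finset.range N, Set.indicator Cᶜ (hSeq κ C V (n+1)) z) ∂(κ y) := by
        simp only [hrec]
        exact (integral_finset_sum _ (fun n _ => hint n y)).symm
      have hpt : ∀ z, (∑ n ∈ Finset.range N, Set.indicator Cᶜ (hSeq κ C V (n+1)) z)
          ≤ a1 * (V z - 1) := by
        intro z
        by_cases hz : z ∈ Cᶜ
        · calc ∑ n ∈ Finset.range N, Set.indicator Cᶜ (hSeq κ C V (n+1)) z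
              = ∑ n ∈ Finset.range N, hSeq κ C V (n+1) z :=
                Finset.sum_congr rfl fun n _ => Set.indicator_of_mem hz _
            _ ≤ a1 * (V z - 1) := ih z hz
        · rw [Finset.sum_congr rfl (fun n _ => Set.indicator_of_notMem hz _)]
          simp only [Finset.sum_const_zero]
          exact mul_nonneg ha1 (by linarith [hV1 z])
      have h2 : ∫ z, (∑ n ∈ Finset.range N, Set.indicator Cᶜ (hSeq κ C V (n+1)) z) ∂(κ y)
          ≤ ∫ z, a1 * (V z - 1) ∂(κ y) :=
        integral_mono (integrable_finset_sum _ (fun n _ => hint n y)) (hintV1 a1 y) hpt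
      rw [hintVeq a1 y] at h2
      have h4 : ∫ z, V z ∂(κ y) ≤ lam * V y := hout y hy
      have k1 : a1 * ((∫ z, V z ∂(κ y)) - 1) ≤ a1 * (lam * V y - 1) :=
        mul_le_mul_of_nonneg_left (by linarith) ha1
      have k4 : (lam + a1 * lam) * V y = a1 * V y := by rw [haa]
      rw [hsum, hrw, hone]
      nlinarith [h2, k1, k4, h4]
  -- bound for ∑ (r^{n+1}-1) h_{n+1} off C
  have hD : ∀ N, ∀ y ∉ C,
      ∑ n ∈ Finset.range N, (r ^ (n+1) - 1) * hSeq κ C V (n+1) y ≤ β * (V y - 1) := by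
    intro N
    induction N with
    | zero =>
      intro y hy; simp only [Finset.range_zero, Finset.sum_empty]
      exact mul_nonneg hβ (by linarith [hV1 y])
    | succ N ih =>
      intro y hy
      have hsum : ∑ n ∈ Finset.range (N+1), (r ^ (n+1) - 1) * hSeq κ C V (n+1) y
          = (∑ n ∈ Finset.range N, (r ^ (n+2) - 1) * hSeq κ C V (n+2) y)
            + (r - 1) * hSeq κ C V 1 y := by
        rw [Finset.sum_range_succ' (fun n => (r ^ (n+1) - 1) * hSeq κ C V (n+1) y) N]
        norm_num
      have hrw : ∑ n ∈ Finset.range N, (r ^ (n+2) - 1) * hSeq κ C V (n+2) y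
          = ∫ z, (∑ n ∈ Finset.range N,
              (r ^ (n+2) - 1) * Set.indicator Cᶜ (hSeq κ C V (n+1)) z) ∂(κ y) := by
        rw [integral_finset_sum _ (fun n _ => (hint n y).const_mul _)]
        refine Finset.sum_congr rfl fun n _ => ?_
        rw [hrec, integral_const_mul]
      have hpt : ∀ z, (∑ n ∈ Finset.range N,
          (r ^ (n+2) - 1) * Set.indicator Cᶜ (hSeq κ C V (n+1)) z) ≤ γ * (V z - 1) := by
        intro z
        by_cases hz : z ∈ Cᶜ
        · have he : ∑ n ∈ Finset.range N, (r ^ (n+2) - 1) * Set.indicator Cᶜ (hSeq κ C V (n+1)) z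
              = r * (∑ n ∈ Finset.range N, (r ^ (n+1) - 1) * hSeq κ C V (n+1) z)
                + (r - 1) * (∑ n ∈ Finset.range N, hSeq κ C V (n+1) z) := by
            rw [Finset.mul_sum, Finset.mul_sum, ← Finset.sum_add_distrib]
            refine Finset.sum_congr rfl fun n _ => ?_
            rw [Set.indicator_of_mem hz]; ring
          rw [he]
          have hd := mul_le_mul_of_nonneg_left (ih z hz) hr0
          have hf := mul_le_mul_of_nonneg_left (hF1 N z hz) (by linarith : (0:ℝ) ≤ r - 1)
          have hexp : γ * (V z - 1) = r * (β * (V z - 1)) + (r - 1) * (a1 * (V z - 1)) := by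
            rw [hγdef]; ring
          linarith [hd, hf]
        · rw [Finset.sum_congr rfl (fun n _ => by
            rw [Set.indicator_of_notMem hz, mul_zero])]
          simp only [Finset.sum_const_zero]
          exact mul_nonneg hγ (by linarith [hV1 z])
      have h2 : ∫ z, (∑ n ∈ Finset.range N,
            (r ^ (n+2) - 1) * Set.indicator Cᶜ (hSeq κ C V (n+1)) z) ∂(κ y)
          ≤ ∫ z, γ * (V z - 1) ∂(κ y) :=
        integral_mono (integrable_finset_sum _ (fun n _ => (hint n y).const_mul _))
          (hintV1 γ y) hpt
      rw [hintVeq γ y] at h2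
      have h4 : ∫ z, V z ∂(κ y) ≤ lam * V y := hout y hy
      have k1 : γ * ((∫ z, V z ∂(κ y)) - 1) ≤ γ * (lam * V y - 1) :=
        mul_le_mul_of_nonneg_left (by linarith) hγ
      have k4 : (lam * (r - 1) + γ * lam) * V y = β * V y := by rw [hγβ]
      have k5 := mul_le_mul_of_nonneg_left h4 (by linarith : (0:ℝ) ≤ r - 1)
      rw [hsum, hrw, hone]
      nlinarith [h2, k1, k4, k5, hβγ]
  -- K ≥ 1
  have hK1 : (1:ℝ) ≤ K := by
    have : (1:ℝ) ≤ ∫ z, V z ∂(κ x) := by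
      have := integral_mono (integrable_const (1:ℝ)) (hVint x) hV1
      simpa using this
    linarith [hin x hxC]
  -- main partial-sum bound at x ∈ C
  have hmain : ∀ N, ∑ n ∈ Finset.range N,
      (r ^ n * hSeq κ C V n x - r * hSeq κ C V n x) ≤ r * β * (K - 1) := by
    have hB : 0 ≤ r * β * (K - 1) :=
      mul_nonneg (mul_nonneg hr0 hβ) (by linarith)
    have key : ∀ P, ∑ n ∈ Finset.range P,
        (r ^ (n+2) - r) * hSeq κ C V (n+2) x ≤ r * β * (K - 1) := by
      intro P
      have hrw : ∑ n ∈ Finset.range P, (r ^ (n+2) - r) * hSeq κ C V (n+2) x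
          = ∫ z, (∑ n ∈ Finset.range P,
              (r ^ (n+2) - r) * Set.indicator Cᶜ (hSeq κ C V (n+1)) z) ∂(κ x) := by
        rw [integral_finset_sum _ (fun n _ => (hint n x).const_mul _)]
        refine Finset.sum_congr rfl fun n _ => ?_
        rw [hrec, integral_const_mul]
      have hpt : ∀ z, (∑ n ∈ Finset.range P,
          (r ^ (n+2) - r) * Set.indicator Cᶜ (hSeq κ C V (n+1)) z)
          ≤ (r * β) * (V z - 1) := by
        intro z
        by_cases hz : z ∈ Cᶜ
        · have he : ∑ n ∈ Finset.range P, (r ^ (n+2) - r) * Set.indicator Cᶜ (hSeq κ C V (n+1)) z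
              = r * (∑ n ∈ Finset.range P, (r ^ (n+1) - 1) * hSeq κ C V (n+1) z) := by
            rw [Finset.mul_sum]
            refine Finset.sum_congr rfl fun n _ => ?_
            rw [Set.indicator_of_mem hz]; ring
          rw [he]
          have hd := mul_le_mul_of_nonneg_left (hD P z hz) hr0
          linarith [hd, mul_assoc r β (V z - 1)]
        · rw [Finset.sum_congr rfl (fun n _ => by
            rw [Set.indicator_of_notMem hz, mul_zero])]
          simp only [Finset.sum_const_zero]
          exact mul_nonneg (mul_nonneg hr0 hβ) (by linarith [hV1 z])
      have h2 : ∫ z, (∑ n ∈ Finset.range P,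
            (r ^ (n+2) - r) * Set.indicator Cᶜ (hSeq κ C V (n+1)) z) ∂(κ x)
          ≤ ∫ z, (r * β) * (V z - 1) ∂(κ x) :=
        integral_mono (integrable_finset_sum _ (fun n _ => (hint n x).const_mul _))
          (hintV1 (r*β) x) hpt
      rw [hintVeq (r*β) x] at h2
      have h4 : ∫ z, V z ∂(κ x) ≤ K := hin x hxC
      have k1 : (r * β) * ((∫ z, V z ∂(κ x)) - 1) ≤ (r * β) * (K - 1) :=
        mul_le_mul_of_nonneg_left (by linarith) (mul_nonneg hr0 hβ)
      rw [hrw]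
      linarith [h2, k1]
    intro N
    cases N with
    | zero => simpa using hB
    | succ M =>
      cases M with
      | zero =>
        simpa [hzero] using hB
      | succ P =>
        have e1 : ∑ n ∈ Finset.range (P+2),
            (r ^ n * hSeq κ C V n x - r * hSeq κ C V n x)
            = ∑ n ∈ Finset.range (P+1),
              (r ^ (n+1) * hSeq κ C V (n+1) x - r * hSeq κ C V (n+1) x) := by
          rw [Finset.sum_range_succ'
            (fun n => r ^ n * hSeq κ C V n x - r * hSeq κ C V n x) (P+1)]
          simp [hzero]
        have e2 : ∑ n ∈ Finset.range (P+1),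
            (r ^ (n+1) * hSeq κ C V (n+1) x - r * hSeq κ C V (n+1) x)
            = ∑ n ∈ Finset.range P, (r ^ (n+2) - r) * hSeq κ C V (n+2) x := by
          rw [Finset.sum_range_succ'
            (fun n => r ^ (n+1) * hSeq κ C V (n+1) x - r * hSeq κ C V (n+1) x) P]
          have h0 : r ^ (0+1) * hSeq κ C V (0+1) x - r * hSeq κ C V (0+1) x = 0 := by
            rw [pow_one]; ring
          rw [h0, add_zero]
          exact Finset.sum_congr rfl fun n _ => by ring
        rw [e1, e2]; exact key P
  -- bound at x ∈ C for h (n+2)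
  have hhx : ∀ n, hSeq κ C V (n+2) x ≤ lam ^ (n+1) * K := by
    intro n
    calc hSeq κ C V (n+2) x = ∫ z, Set.indicator Cᶜ (hSeq κ C V (n+1)) z ∂(κ x) := hrec n x
      _ ≤ ∫ z, lam ^ (n+1) * V z ∂(κ x) :=
          integral_mono (hint n x) ((hVint x).const_mul _) (hind_le n)
      _ = lam ^ (n+1) * ∫ z, V z ∂(κ x) := integral_const_mul _ _
      _ ≤ lam ^ (n+1) * K := mul_le_mul_of_nonneg_left (hin x hxC) (by positivity)
  -- summability
  have hSg : Summable (fun n => hSeq κ C V n x) := by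
    rw [← summable_nat_add_iff 2]
    refine Summable.of_nonneg_of_le (fun n => hpos (n+2) x) (fun n => ?_)
      (((summable_geometric_of_lt_one hlam0.le hlam1).mul_left (lam * K)))
    calc hSeq κ C V (n+2) x ≤ lam ^ (n+1) * K := hhx n
      _ = lam * K * lam ^ n := by ring
  have hSf : Summable (fun n => r ^ n * hSeq κ C V n x) := by
    rw [← summable_nat_add_iff 2]
    have hrl0 : (0:ℝ) ≤ r * lam := mul_nonneg hr0 hlam0.le
    refine Summable.of_nonneg_of_le
      (fun n => mul_nonneg (by positivity) (hpos (n+2) x)) (fun n => ?_)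
      (((summable_geometric_of_lt_one hrl0 hrl).mul_left (r ^ 2 * (lam * K))))
    calc r ^ (n+2) * hSeq κ C V (n+2) x ≤ r ^ (n+2) * (lam ^ (n+1) * K) :=
          mul_le_mul_of_nonneg_left (hhx n) (by positivity)
      _ = r ^ 2 * (lam * K) * (r * lam) ^ n := by ring
  -- rewrite the difference of tsums
  have hts : (∑' n, r ^ n * hSeq κ C V n x) - r * ∑' n, hSeq κ C V n x
      = ∑' n, (r ^ n * hSeq κ C V n x - r * hSeq κ C V n x) := by
    rw [← tsum_mul_left, ← Summable.tsum_sub hSf (hSg.mul_left r)]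
  have hnn : ∀ n, 0 ≤ r ^ n * hSeq κ C V n x - r * hSeq κ C V n x := by
    intro n
    cases n with
    | zero => simp [hzero]
    | succ m =>
      have h1 : r ^ 1 ≤ r ^ (m+1) := pow_le_pow_right₀ (by linarith) (by omega)
      rw [pow_one] at h1
      nlinarith [hpos (m+1) x]
  have hfinal : (∑' n, r ^ n * hSeq κ C V n x) - r * ∑' n, hSeq κ C V n x
      ≤ r * β * (K - 1) := by
    rw [hts]
    exact Real.tsum_le_of_sum_range_le hnn hmain
  rw [div_le_iff₀ (by linarith : (0:ℝ) < r - 1)]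
  have heq : lam * r * (K - 1) / ((1 - lam) * (1 - r * lam)) * (r - 1) = r * β * (K - 1) := by
    rw [hβdef]; field_simp [h1lam.ne', h1rl.ne']
  rw [heq]
  exact hfinal
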